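/- Fix j ∈ {1,…,N} and assume: (a) (D_j R_j A V, W^j) = (D_j B_j R_j V, W^j) for all V ∈ ℂ^n and all W^j ∈ ℂ^{n_j}; (d) there exists C_{D,j} > 0 with ‖D_j W^j‖_{Ω_j} ≤ C_{D,j} ‖W^j‖_{Ω_j} for all W^j ∈ ℂ^{n_j}; (e) there exists C_{DB,j} > 0 with |([D_j, B_j] V^j, W^j)| ≤ C_{DB,j} ‖V^j‖_{Ω_j} ‖W^j‖_{Ω_j} for all V^j, W^j ∈ ℂ^{n_j}; (f) there exists C_{stab,j} > 0 such that ‖U^j‖_{Ω_j} ≤ C_{stab,j} · max_{W^j ≠ 0} |(B_j U^j, W^j)| / ‖W^j‖_{Ω_j} for all U^j ∈ ℂ^{n_j}. Then for all V ∈ ℂ^n, ‖B_j⁻¹ D_j R_j A V‖_{Ω_j} ≤ (C_{stab,j} C_{DB,j} + C_{D,j}) ‖R_j V‖_{Ω_j}. -/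

import Mathlib

open Matrix
open scoped ComplexOrder

/-- Hermitian inner product `(V, W) = W* V`. -/
noncomputable def iprod {m : ℕ} (V W : Fin m → ℂ) : ℂ := star W ⬝ᵥ V

/-- Weighted norm `‖V‖_F = ((F V, V))^{1/2}` for a Hermitian positive definite `F`. -/
noncomputable def wnorm {m : ℕ} (F : Matrix (Fin m) (Fin m) ℂ) (V : Fin m → ℂ) : ℝ :=
  Real.sqrt (iprod (F.mulVec V) V).re

lemma wnorm_eq_norm {m : ℕ} {F : Matrix (Fin m) (Fin m) ℂ} (hF : F.PosDef)
    (V : Fin m → ℂ) :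
    wnorm F V = @norm _ (Matrix.toNormedAddCommGroup F hF).toNorm V := by
  unfold wnorm iprod
  rw [dotProduct_comm]
  with_unfolding_all rfl

lemma wnorm_nonneg {m : ℕ} {F : Matrix (Fin m) (Fin m) ℂ} (hF : F.PosDef)
    (V : Fin m → ℂ) : 0 ≤ wnorm F V :=
  Real.sqrt_nonneg _

lemma wnorm_pos {m : ℕ} {F : Matrix (Fin m) (Fin m) ℂ} (hF : F.PosDef)
    {V : Fin m → ℂ} (hV : V ≠ 0) : 0 < wnorm F V := by
  rw [wnorm_eq_norm hF]
  exact @norm_pos_iff _ (Matrix.toNormedAddCommGroup F hF).toNormedAddGroup V |>.2 hV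

lemma wnorm_add_le {m : ℕ} {F : Matrix (Fin m) (Fin m) ℂ} (hF : F.PosDef)
    (V W : Fin m → ℂ) : wnorm F (V + W) ≤ wnorm F V + wnorm F W := by
  rw [wnorm_eq_norm hF, wnorm_eq_norm hF, wnorm_eq_norm hF]
  exact @norm_add_le _ (@NormedAddGroup.toSeminormedAddGroup _ (Matrix.toNormedAddCommGroup F hF).toNormedAddGroup) V W

lemma iprod_single {m : ℕ} (x : Fin m → ℂ) (i : Fin m) :
    iprod x (Pi.single i 1) = x i := by
  simp [iprod, dotProduct, Pi.single_apply, apply_ite]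

/-- under (a), (d), (e), (f),
`‖B⁻¹ D R A V‖_{Ω_j} ≤ (C_stab C_DB + C_D) ‖R V‖_{Ω_j}`. -/
theorem stmt4 (n m N : ℕ) (hn : 1 ≤ n) (hN : 1 ≤ N) (hm : 1 ≤ m)
    (A : Matrix (Fin n) (Fin n) ℂ)
    (R : Matrix (Fin m) (Fin n) ℂ)
    (D B : Matrix (Fin m) (Fin m) ℂ)
    (FF : Matrix (Fin m) (Fin m) ℂ)
    (hD : ∃ dd : Fin m → ℝ, (∀ i, 0 ≤ dd i) ∧ D = Matrix.diagonal fun i => (dd i : ℂ))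
    (hB : IsUnit B)
    (hFF : FF.PosDef)
    (CD CDB Cstab : ℝ) (hCD : 0 < CD) (hCDB : 0 < CDB) (hCstab : 0 < Cstab)
    (ha : ∀ (V : Fin n → ℂ) (W : Fin m → ℂ),
      iprod (D.mulVec (R.mulVec (A.mulVec V))) W
        = iprod (D.mulVec (B.mulVec (R.mulVec V))) W)
    (hd : ∀ W : Fin m → ℂ, wnorm FF (D.mulVec W) ≤ CD * wnorm FF W)
    (he : ∀ V W : Fin m → ℂ,
      ‖iprod ((D * B - B * D).mulVec V) W‖ ≤ CDB * wnorm FF V * wnorm FF W)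
    (hf : ∀ U : Fin m → ℂ,
      wnorm FF U ≤ Cstab * ⨆ W : {W : Fin m → ℂ // W ≠ 0},
        ‖iprod (B.mulVec U) W.1‖ / wnorm FF W.1) :
    ∀ V : Fin n → ℂ,
      wnorm FF ((B⁻¹ * D * R * A).mulVec V)
        ≤ (Cstab * CDB + CD) * wnorm FF (R.mulVec V) := by
  intro V
  have hBdet : IsUnit B.det := (Matrix.isUnit_iff_isUnit_det B).1 hB
  set RV : Fin m → ℂ := R.mulVec V with hRV
  -- From (a): D R A V = D B R V
  have key : D *ᵥ (R *ᵥ (A *ᵥ V)) = D *ᵥ (B *ᵥ RV) := by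
    funext i
    have := ha V (Pi.single i 1)
    rwa [iprod_single, iprod_single] at this
  have hcancel : ∀ x : Fin m → ℂ, B⁻¹ *ᵥ (B *ᵥ x) = x := fun x => by
    rw [Matrix.mulVec_mulVec, Matrix.nonsing_inv_mul B hBdet, Matrix.one_mulVec]
  have hU : (B⁻¹ * D * R * A).mulVec V
      = B⁻¹.mulVec ((D * B - B * D).mulVec RV) + D.mulVec RV := by
    have h1 : (B⁻¹ * D * R * A) *ᵥ V = B⁻¹ *ᵥ (D *ᵥ (R *ᵥ (A *ᵥ V))) := by
      simp [Matrix.mulVec_mulVec, Matrix.mul_assoc]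
    have hsplit : ∀ x : Fin m → ℂ,
        D *ᵥ (B *ᵥ x) = (D * B - B * D) *ᵥ x + B *ᵥ (D *ᵥ x) := fun x => by
      simp only [Matrix.mulVec_mulVec, Matrix.sub_mulVec]
      abel
    rw [h1, key, hsplit, Matrix.mulVec_add, hcancel]
  set U' : Fin m → ℂ := B⁻¹.mulVec ((D * B - B * D).mulVec RV) with hU'def
  have hBU' : B.mulVec U' = (D * B - B * D).mulVec RV := by
    rw [hU'def, Matrix.mulVec_mulVec, Matrix.mulVec_mulVec,
      Matrix.mul_nonsing_inv B hBdet, Matrix.one_mul]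
  -- bound on U'
  have hU'bound : wnorm FF U' ≤ Cstab * (CDB * wnorm FF RV) := by
    refine (hf U').trans ?_
    refine mul_le_mul_of_nonneg_left ?_ hCstab.le
    have hne : Nonempty {W : Fin m → ℂ // W ≠ 0} := by
      refine ⟨⟨Pi.single ⟨0, hm⟩ 1, ?_⟩⟩
      intro h
      have := congrFun h ⟨0, hm⟩
      simp [Pi.single_apply] at this
    refine ciSup_le fun W => ?_
    rw [div_le_iff₀ (wnorm_pos hFF W.2)]
    rw [hBU']
    calc ‖iprod ((D * B - B * D).mulVec RV) W.1‖
        ≤ CDB * wnorm FF RV * wnorm FF W.1 := he RV W.1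
      _ = CDB * wnorm FF RV * wnorm FF W.1 := rfl
  calc wnorm FF ((B⁻¹ * D * R * A).mulVec V)
      = wnorm FF (U' + D.mulVec RV) := by rw [hU]
    _ ≤ wnorm FF U' + wnorm FF (D.mulVec RV) := wnorm_add_le hFF _ _
    _ ≤ Cstab * (CDB * wnorm FF RV) + CD * wnorm FF RV := add_le_add hU'bound (hd RV)
    _ = (Cstab * CDB + CD) * wnorm FF RV := by ring
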